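/- arXiv:2309.09050 — 3 statements merged into one kernel-verified Lean document; each statement's English description precedes it below -/
import Mathlib

section
/- Let C ∈ ℝ^{p×p} be symmetric, E ∈ ℝ^{p×m}, G ∈ ℝ^{n×p}, and let F̄ ∈ ℝ^{n×n} be symmetric positive semidefinite. If there exists a scalar λ > 0 such that C + λ E Eᵀ + λ⁻¹ Gᵀ F̄ G ⪯ 0, then for every matrix F ∈ ℝ^{m×n} with Fᵀ F ⪯ F̄ one has C + E F G + Gᵀ Fᵀ Eᵀ ⪯ 0. -/
open Matrix

private lemma psd_add {k : ℕ} {A B : Matrix (Fin k) (Fin k) ℝ}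
    (hA : A.PosSemidef) (hB : B.PosSemidef) : (A + B).PosSemidef := by
  exact hA.add hB

private lemma psd_smul {k : ℕ} {A : Matrix (Fin k) (Fin k) ℝ} {c : ℝ}
    (hA : A.PosSemidef) (hc : 0 ≤ c) : (c • A).PosSemidef := by
  have h1 : (c • A).IsHermitian := by
    unfold Matrix.IsHermitian
    rw [conjTranspose_smul, hA.1.eq]
    simp
  exact hA.smul hc

/-- Lemma 2 of the paper: if there is `λ > 0` with
`C + λ E Eᵀ + λ⁻¹ Gᵀ F̄ G ⪯ 0`, then `C + E F G + Gᵀ Fᵀ Eᵀ ⪯ 0`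
for every `F` with `Fᵀ F ⪯ F̄`. -/
theorem uncertainty_removal {p m n : ℕ}
    (C : Matrix (Fin p) (Fin p) ℝ) (hC : C.IsSymm)
    (E : Matrix (Fin p) (Fin m) ℝ) (G : Matrix (Fin n) (Fin p) ℝ)
    (Fbar : Matrix (Fin n) (Fin n) ℝ) (hFbar : Fbar.PosSemidef)
    (lam : ℝ) (hlam : 0 < lam)
    (h : (-(C + lam • (E * Eᵀ) + lam⁻¹ • (Gᵀ * Fbar * G))).PosSemidef) :
    ∀ F : Matrix (Fin m) (Fin n) ℝ, (Fbar - Fᵀ * F).PosSemidef →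
      (-(C + E * F * G + Gᵀ * Fᵀ * Eᵀ)).PosSemidef := by
  intro F hF
  set N : Matrix (Fin p) (Fin m) ℝ := lam • E - Gᵀ * Fᵀ with hN
  have h2 : (lam⁻¹ • (Gᵀ * (Fbar - Fᵀ * F) * G)).PosSemidef := by
    have := hF.conjTranspose_mul_mul_same G
    simpa using psd_smul (by simpa using this) (by positivity : (0:ℝ) ≤ lam⁻¹)
  have h3 : (lam⁻¹ • (N * Nᵀ)).PosSemidef := by
    have : (N * Nᴴ).PosSemidef := posSemidef_self_mul_conjTranspose N
    simpa using psd_smul (by simpa using this) (by positivity : (0:ℝ) ≤ lam⁻¹)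
  have key : -(C + E * F * G + Gᵀ * Fᵀ * Eᵀ) =
      (-(C + lam • (E * Eᵀ) + lam⁻¹ • (Gᵀ * Fbar * G)))
        + lam⁻¹ • (Gᵀ * (Fbar - Fᵀ * F) * G) + lam⁻¹ • (N * Nᵀ) := by
    have hlam' : lam ≠ 0 := ne_of_gt hlam
    rw [hN]
    simp only [transpose_sub, transpose_smul, transpose_mul, transpose_transpose,
      Matrix.sub_mul, Matrix.mul_sub, Matrix.smul_mul, Matrix.mul_smul,
      smul_sub, smul_smul, smul_add, Matrix.add_mul, Matrix.mul_add,
      inv_mul_cancel₀ hlam', one_smul, Matrix.mul_assoc]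
    rw [show lam⁻¹ * (lam * lam) = lam by field_simp]
    abel
  rw [key]
  exact psd_add (psd_add h h2) h3
end

section
/- Let λ > 0 be a real scalar, a ∈ ℝ, u ∈ ℝⁿ, and w ∈ ℝᵏ, and suppose the symmetric block matrix M = [[a, uᵀ, λ wᵀ], [u, −2λ Iₙ, 0], [λ w, 0, −2λ I_k]] of size (1+n+k) satisfies M ⪯ 0. Then for every matrix Υ ∈ ℝ^{k×n} with L2 operator norm ‖Υ‖ ≤ 1, one has a + ⟨Υ u, w⟩ ≤ 0. -/
open Matrix

/-- If the symmetric block matrix `[[a, uᵀ, λwᵀ], [u, -2λIₙ, 0], [λw, 0, -2λI_k]]`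
is negative semidefinite, then `a + ⟨Υu, w⟩ ≤ 0` for every matrix `Υ` with
L2 operator norm at most `1`. -/
theorem block_nsd_implies_inner_bound {n k : ℕ} (lam : ℝ) (hlam : 0 < lam)
    (a : ℝ) (u : Fin n → ℝ) (w : Fin k → ℝ)
    (M : Matrix (Unit ⊕ (Fin n ⊕ Fin k)) (Unit ⊕ (Fin n ⊕ Fin k)) ℝ)
    (hM : M = Matrix.fromBlocks
      (Matrix.of fun _ _ => a)
      (Matrix.of fun (_ : Unit) j => Sum.elim u (fun i => lam * w i) j)
      (Matrix.of fun (_ : Unit) j => Sum.elim u (fun i => lam * w i) j)ᵀ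
      (Matrix.fromBlocks ((-(2 * lam)) • (1 : Matrix (Fin n) (Fin n) ℝ)) 0 0
        ((-(2 * lam)) • (1 : Matrix (Fin k) (Fin k) ℝ))))
    (hnsd : (-M).PosSemidef) :
    ∀ Υ : Matrix (Fin k) (Fin n) ℝ,
      ‖LinearMap.toContinuousLinearMap (Matrix.toEuclideanLin Υ)‖ ≤ 1 →
        a + Υ.mulVec u ⬝ᵥ w ≤ 0 := by
  intro Υ hΥ
  -- Step 1: the operator-norm bound gives `‖Υu‖² ≤ ‖u‖²`.
  have hb : ∑ j, (Υ *ᵥ u) j ^ 2 ≤ ∑ i, u i ^ 2 := by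
    have h1 : ‖LinearMap.toContinuousLinearMap (Matrix.toEuclideanLin Υ)
        ((WithLp.equiv 2 (Fin n → ℝ)).symm u)‖ ≤ 1 * ‖(WithLp.equiv 2 (Fin n → ℝ)).symm u‖ :=
      le_trans ((LinearMap.toContinuousLinearMap (Matrix.toEuclideanLin Υ)).le_opNorm _)
        (by gcongr)
    simp only [LinearMap.coe_toContinuousLinearMap', WithLp.equiv_symm_apply, toEuclideanLin_apply_piLp_toLp,
      one_mul] at h1
    rw [EuclideanSpace.norm_eq, EuclideanSpace.norm_eq] at h1
    simp only [PiLp.toLp_apply, Real.norm_eq_abs, sq_abs] at h1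
    calc ∑ j, (Υ *ᵥ u) j ^ 2 = Real.sqrt (∑ j, (Υ *ᵥ u) j ^ 2) ^ 2 := by
          rw [Real.sq_sqrt (by positivity)]
      _ ≤ Real.sqrt (∑ i, u i ^ 2) ^ 2 := by
          apply pow_le_pow_left₀ (Real.sqrt_nonneg _) h1
      _ = ∑ i, u i ^ 2 := Real.sq_sqrt (by positivity)
  -- Step 2: test the quadratic form on `x = (1, u/(2λ), (Υu)/(2λ))`.
  set v : Fin k → ℝ := Υ *ᵥ u with hv
  set c : ℝ := (2*lam)⁻¹ with hc
  set x : Unit ⊕ (Fin n ⊕ Fin k) → ℝ :=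
    Sum.elim (fun _ => 1) (Sum.elim (fun i => c * u i) (fun j => c * v j)) with hxdef
  have hx := hnsd.dotProduct_mulVec_nonneg x
  rw [hM] at hx
  simp only [star_trivial, neg_mulVec, dotProduct_neg, hxdef, fromBlocks_mulVec,
    sumElim_dotProduct_sumElim, smul_mulVec, one_mulVec, zero_mulVec,
    add_zero, zero_add, Sum.elim_comp_inl, Sum.elim_comp_inr] at hx
  simp only [mulVec, dotProduct, Matrix.of_apply, transpose_apply, Sum.elim_inl, Sum.elim_inr,
    Pi.add_apply, Pi.smul_apply, smul_eq_mul, Finset.univ_unique, Finset.sum_const,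
    Finset.card_singleton, one_smul, Pi.neg_apply, Fintype.sum_sum_type, one_mul, mul_one] at hx
  have e1 : ∑ i, u i * (c * u i) = c * ∑ i, u i ^ 2 := by
    rw [Finset.mul_sum]; exact Finset.sum_congr rfl fun i _ => by ring
  have e2 : ∑ j, lam * w j * (c * v j) = (lam * c) * ∑ j, v j * w j := by
    rw [Finset.mul_sum]; exact Finset.sum_congr rfl fun j _ => by ring
  have e3 : ∑ i, c * u i * (u i + -(2 * lam) * (c * u i)) =
      (c - 2 * lam * c ^ 2) * ∑ i, u i ^ 2 := by
    rw [Finset.mul_sum]; exact Finset.sum_congr rfl fun i _ => by ring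
  have e4 : ∑ j, c * v j * (lam * w j + -(2 * lam) * (c * v j)) =
      (lam * c) * ∑ j, v j * w j - (2 * lam * c ^ 2) * ∑ j, v j ^ 2 := by
    rw [Finset.mul_sum, Finset.mul_sum, ← Finset.sum_sub_distrib]
    exact Finset.sum_congr rfl fun j _ => by ring
  rw [e1, e2, e3, e4] at hx
  have hgoal : Υ.mulVec u ⬝ᵥ w = ∑ j, v j * w j := rfl
  rw [hgoal]
  -- Step 3: arithmetic.
  have hcl : 2 * lam * c = 1 := by rw [hc, mul_inv_cancel₀ (by positivity)]
  have hc0 : 0 < c := by positivity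
  have h2c : 2 * lam * c ^ 2 = c := by rw [pow_two, ← mul_assoc, hcl, one_mul]
  have hlc : lam * c = 1/2 := by linarith
  rw [h2c, hlc] at hx
  linarith [mul_le_mul_of_nonneg_left hb hc0.le]
end

section
/- Let Ā ∈ ℝ^{q×q} be symmetric positive definite, let B̄ ∈ ℝ^{q×n}, and set ζ̄ := −Ā⁻¹ B̄. Then for a matrix ζ ∈ ℝ^{q×n}, the inequality B̄ᵀ Ā⁻¹ B̄ + B̄ᵀ ζ + ζᵀ B̄ + ζᵀ Ā ζ ⪯ Iₙ holds if and only if there exists a matrix Υ ∈ ℝ^{q×n} with L2 operator norm ‖Υ‖ ≤ 1 such that ζ = ζ̄ + Ā^{−1/2} Υ, where Ā^{−1/2} denotes the (unique symmetric positive definite) square root of Ā⁻¹. -/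
open Matrix

open scoped ComplexOrder in
/-- The positive semidefinite square root of a positive semidefinite matrix
(as defined in Mathlib of December 2024, since removed). -/
noncomputable def Matrix.PosSemidef.sqrt {n : Type*} [Fintype n] [DecidableEq n]
    {𝕜 : Type*} [RCLike 𝕜] {A : Matrix n n 𝕜} (hA : A.PosSemidef) : Matrix n n 𝕜 :=
  hA.1.eigenvectorUnitary.1 * diagonal ((↑) ∘ (√·) ∘ hA.1.eigenvalues) *
  (star hA.1.eigenvectorUnitary : Matrix n n 𝕜)

namespace Matrix.PosSemidef

lemma sqrt_eq_cfc' {m : Type*} [Fintype m] [DecidableEq m] {A : Matrix m m ℝ}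
    (hA : A.PosSemidef) : hA.sqrt = cfc Real.sqrt A := by
  rw [hA.1.cfc_eq, IsHermitian.cfc, Unitary.conjStarAlgAut_apply]
  rfl

lemma spec_nonneg' {m : Type*} [Fintype m] [DecidableEq m] {A : Matrix m m ℝ}
    (hA : A.PosSemidef) : ∀ x ∈ spectrum ℝ A, 0 ≤ x := by
  intro x hx
  rw [hA.1.spectrum_real_eq_range_eigenvalues] at hx
  obtain ⟨i, rfl⟩ := hx
  exact hA.eigenvalues_nonneg i

lemma posSemidef_sqrt {m : Type*} [Fintype m] [DecidableEq m] {A : Matrix m m ℝ}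
    (hA : A.PosSemidef) : hA.sqrt.PosSemidef := by
  have hD : (diagonal ((↑) ∘ (√·) ∘ hA.1.eigenvalues) : Matrix m m ℝ).PosSemidef :=
    posSemidef_diagonal_iff.mpr fun i => by simp [Real.sqrt_nonneg]
  have := hD.mul_mul_conjTranspose_same (hA.1.eigenvectorUnitary : Matrix m m ℝ)
  simpa [Matrix.PosSemidef.sqrt, Unitary.coe_star, star_eq_conjTranspose, Function.comp_def] using this

lemma sqrt_mul_self {m : Type*} [Fintype m] [DecidableEq m] {A : Matrix m m ℝ}
    (hA : A.PosSemidef) : hA.sqrt * hA.sqrt = A := by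
  have hsa : IsSelfAdjoint A := hA.1.isSelfAdjoint
  rw [sqrt_eq_cfc', ← cfc_mul Real.sqrt Real.sqrt A]
  conv_rhs => rw [← cfc_id' ℝ A hsa]
  refine cfc_congr fun x hx => ?_
  simp [Real.mul_self_sqrt (spec_nonneg' hA x hx)]

lemma eq_sqrt_of_sq_eq {m : Type*} [Fintype m] [DecidableEq m] {A B : Matrix m m ℝ}
    (hA : A.PosSemidef) (hB : B.PosSemidef) (h : A ^ 2 = B) : A = hB.sqrt := by
  have hsa : IsSelfAdjoint A := hA.1.isSelfAdjoint
  have h2 : B = cfc (fun x : ℝ => x ^ 2) A := by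
    rw [← h, cfc_pow_id A 2 hsa]
  rw [sqrt_eq_cfc', h2, ← cfc_comp Real.sqrt (fun x : ℝ => x ^ 2) A hsa]
  conv_lhs => rw [← cfc_id' ℝ A hsa]
  refine cfc_congr fun x hx => ?_
  simp [Real.sqrt_sq (spec_nonneg' hA x hx)]

end Matrix.PosSemidef

/-- `‖Υ‖ ≤ 1` (L2 operator norm) iff `1 - ΥᵀΥ ⪰ 0`. -/
lemma norm_le_one_iff_posSemidef {q n : ℕ} (Υ : Matrix (Fin q) (Fin n) ℝ) :
    ‖LinearMap.toContinuousLinearMap (Matrix.toEuclideanLin Υ)‖ ≤ 1 ↔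
      ((1 : Matrix (Fin n) (Fin n) ℝ) - Υᵀ * Υ).PosSemidef := by
  set T := LinearMap.toContinuousLinearMap (Matrix.toEuclideanLin Υ) with hT
  have key : ∀ x : Fin n → ℝ,
      x ⬝ᵥ (((1 : Matrix (Fin n) (Fin n) ℝ) - Υᵀ * Υ) *ᵥ x)
        = ‖(WithLp.equiv 2 (Fin n → ℝ)).symm x‖ ^ 2
          - ‖T ((WithLp.equiv 2 (Fin n → ℝ)).symm x)‖ ^ 2 := by
    intro x
    have h1 : ‖(WithLp.equiv 2 (Fin n → ℝ)).symm x‖ ^ 2 = x ⬝ᵥ x := by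
      rw [← real_inner_self_eq_norm_sq, EuclideanSpace.inner_eq_star_dotProduct]
      simp [dotProduct, mul_comm]
    have h2 : ‖T ((WithLp.equiv 2 (Fin n → ℝ)).symm x)‖ ^ 2
        = (Υ *ᵥ x) ⬝ᵥ (Υ *ᵥ x) := by
      rw [← real_inner_self_eq_norm_sq]
      have : T ((WithLp.equiv 2 (Fin n → ℝ)).symm x)
          = (WithLp.equiv 2 (Fin q → ℝ)).symm (Υ *ᵥ x) := by
        simp [hT, Matrix.toEuclideanLin_apply]
      rw [this, EuclideanSpace.inner_eq_star_dotProduct]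
      simp [dotProduct, mul_comm]
    have h3 : x ⬝ᵥ ((Υᵀ * Υ) *ᵥ x) = (Υ *ᵥ x) ⬝ᵥ (Υ *ᵥ x) := by
      rw [← Matrix.mulVec_mulVec, Matrix.dotProduct_mulVec, Matrix.vecMul_transpose]
    rw [h1, h2, Matrix.sub_mulVec, dotProduct_sub, Matrix.one_mulVec, h3]
  constructor
  · intro hnorm
    refine Matrix.PosSemidef.of_dotProduct_mulVec_nonneg ((Matrix.isHermitian_one).sub ?_) fun x => ?_
    · simpa using Matrix.isHermitian_conjTranspose_mul_self Υ
    · have hle := T.le_opNorm ((WithLp.equiv 2 (Fin n → ℝ)).symm x)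
      have : ‖T ((WithLp.equiv 2 (Fin n → ℝ)).symm x)‖
          ≤ ‖(WithLp.equiv 2 (Fin n → ℝ)).symm x‖ := by
        calc ‖T ((WithLp.equiv 2 (Fin n → ℝ)).symm x)‖
            ≤ ‖T‖ * ‖(WithLp.equiv 2 (Fin n → ℝ)).symm x‖ := hle
          _ ≤ 1 * ‖(WithLp.equiv 2 (Fin n → ℝ)).symm x‖ := by
              exact mul_le_mul_of_nonneg_right hnorm (norm_nonneg _)
          _ = _ := one_mul _
      have := pow_le_pow_left₀ (norm_nonneg _) this 2
      simp only [star_trivial, key x]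
      linarith
  · intro hpsd
    refine T.opNorm_le_bound zero_le_one fun y => ?_
    rw [one_mul]
    set x : Fin n → ℝ := WithLp.equiv 2 (Fin n → ℝ) y with hx
    have hy : y = (WithLp.equiv 2 (Fin n → ℝ)).symm x := rfl
    have := hpsd.dotProduct_mulVec_nonneg x
    simp only [star_trivial, key x] at this
    rw [hy]
    nlinarith [norm_nonneg (T ((WithLp.equiv 2 (Fin n → ℝ)).symm x)),
      norm_nonneg ((WithLp.equiv 2 (Fin n → ℝ)).symm x)]

/-- Parametrization of the matrix ellipsoid: for `Ā ≻ 0` and `ζ̄ = -Ā⁻¹B̄`,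
`B̄ᵀĀ⁻¹B̄ + B̄ᵀζ + ζᵀB̄ + ζᵀĀζ ⪯ I` iff `ζ = ζ̄ + Ā^{-1/2} Υ` for some `Υ`
of L2 operator norm at most `1`. -/
theorem ellipsoid_parametrization {q n : ℕ}
    (Abar : Matrix (Fin q) (Fin q) ℝ) (hA : Abar.PosDef)
    (Bbar : Matrix (Fin q) (Fin n) ℝ)
    (ζbar : Matrix (Fin q) (Fin n) ℝ) (hζbar : ζbar = -(Abar⁻¹ * Bbar))
    (ζ : Matrix (Fin q) (Fin n) ℝ) :
    ((1 : Matrix (Fin n) (Fin n) ℝ)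
        - (Bbarᵀ * Abar⁻¹ * Bbar + Bbarᵀ * ζ + ζᵀ * Bbar + ζᵀ * Abar * ζ)).PosSemidef
      ↔ ∃ Υ : Matrix (Fin q) (Fin n) ℝ,
          ‖LinearMap.toContinuousLinearMap (Matrix.toEuclideanLin Υ)‖ ≤ 1 ∧
          ζ = ζbar + hA.inv.posSemidef.sqrt * Υ := by
  have hAunit : IsUnit Abar.det := hA.det_pos.ne'.isUnit
  set S := hA.posSemidef.sqrt with hS
  set R := hA.inv.posSemidef.sqrt with hR
  have hSS : S * S = Abar := hA.posSemidef.sqrt_mul_self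
  have hSsym : Sᵀ = S := by
    have := hA.posSemidef.posSemidef_sqrt.1
    simpa [Matrix.IsHermitian, Matrix.conjTranspose_eq_transpose_of_trivial] using this
  -- S is invertible
  have hSunit : IsUnit S.det := by
    have : S.det * S.det = Abar.det := by rw [← Matrix.det_mul, hSS]
    exact isUnit_of_mul_isUnit_left (this ▸ hAunit)
  -- R = S⁻¹
  have hRS : R = S⁻¹ := by
    have hinvps : (S⁻¹).PosSemidef := by
      have h := hA.posSemidef.posSemidef_sqrt.conjTranspose_mul_mul_same S⁻¹
      have hh : (S⁻¹)ᴴ * S * S⁻¹ = S⁻¹ := by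
        have hherm : (S⁻¹)ᴴ = S⁻¹ := hA.posSemidef.posSemidef_sqrt.1.inv
        rw [hherm, Matrix.mul_assoc, Matrix.mul_nonsing_inv _ hSunit, Matrix.mul_one]
      rwa [hh] at h
    have hsq : (S⁻¹) ^ 2 = Abar⁻¹ := by
      rw [pow_two, ← Matrix.mul_inv_rev, hSS]
    exact (hinvps.eq_sqrt_of_sq_eq hA.inv.posSemidef hsq).symm
  have hSR : S * R = 1 := by rw [hRS, Matrix.mul_nonsing_inv _ hSunit]
  have hRSmul : R * S = 1 := by rw [hRS, Matrix.nonsing_inv_mul _ hSunit]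
  have hAsym0 : Abarᵀ = Abar := by
    simpa [Matrix.IsHermitian, Matrix.conjTranspose_eq_transpose_of_trivial] using hA.1
  have hAinvT : (Abar⁻¹)ᵀ = Abar⁻¹ := by
    rw [Matrix.transpose_nonsing_inv, hAsym0]
  have hAζbar : Abar * ζbar = -Bbar := by
    rw [hζbar, Matrix.mul_neg, ← Matrix.mul_assoc, Matrix.mul_nonsing_inv _ hAunit, Matrix.one_mul]
  -- key algebraic identity
  have keyalg : ∀ W : Matrix (Fin q) (Fin n) ℝ,
      (S * (W - ζbar))ᵀ * (S * (W - ζbar))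
        = Bbarᵀ * Abar⁻¹ * Bbar + Bbarᵀ * W + Wᵀ * Bbar + Wᵀ * Abar * W := by
    intro W
    have hAsym : Abarᵀ = Abar := by
      simpa [Matrix.IsHermitian, Matrix.conjTranspose_eq_transpose_of_trivial] using hA.1
    have expand : (S * (W - ζbar))ᵀ * (S * (W - ζbar))
        = (W - ζbar)ᵀ * Abar * (W - ζbar) := by
      rw [Matrix.transpose_mul, hSsym]
      rw [Matrix.mul_assoc, Matrix.mul_assoc, ← Matrix.mul_assoc S, hSS, ← Matrix.mul_assoc]
    rw [expand]
    have hζbarT : ζbarᵀ * Abar = -Bbarᵀ := by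
      have := congrArg Matrix.transpose hAζbar
      rwa [Matrix.transpose_mul, hAsym, Matrix.transpose_neg] at this
    have hζbarAζbar : ζbarᵀ * Abar * ζbar = Bbarᵀ * Abar⁻¹ * Bbar := by
      rw [hζbarT, hζbar]
      rw [Matrix.mul_neg, Matrix.neg_mul, neg_neg, ← Matrix.mul_assoc]
    rw [Matrix.transpose_sub, Matrix.sub_mul, Matrix.sub_mul, Matrix.mul_sub, Matrix.mul_sub]
    rw [hζbarAζbar]
    have h1 : Wᵀ * Abar * ζbar = -(Wᵀ * Bbar) := by
      rw [Matrix.mul_assoc, hAζbar, Matrix.mul_neg]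
    have h2 : ζbarᵀ * Abar * W = -(Bbarᵀ * W) := by
      rw [hζbarT, Matrix.neg_mul]
    rw [h1, h2]
    abel
  constructor
  · intro hpsd
    refine ⟨S * (ζ - ζbar), ?_, ?_⟩
    · rw [norm_le_one_iff_posSemidef, keyalg]
      exact hpsd
    · rw [← Matrix.mul_assoc, hRSmul, Matrix.one_mul]
      abel
  · rintro ⟨Υ, hΥ, rfl⟩
    have hW : S * ((ζbar + R * Υ) - ζbar) = Υ := by
      rw [add_sub_cancel_left, ← Matrix.mul_assoc, hSR, Matrix.one_mul]
    rw [← keyalg, hW]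
    exact (norm_le_one_iff_posSemidef Υ).mp hΥ
end
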